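/- (Convergence of DP-α-NormEC.) Consider the DP-α-NormEC iterates on a probability space (Ω, μ) for differentiable functions f₁, …, f_n : ℝ^d → ℝ, where each f_i has L_i-Lipschitz gradient, and f := (1/n)∑_{i=1}^n f_i has L-Lipschitz gradient and satisfies f(x) ≥ f_inf for all x ∈ ℝ^d, where f_inf ∈ ℝ. Assume the noise vectors z_i^k : Ω → ℝ^d are measurable, ‖z_i^k‖² is integrable with E[‖z_i^k‖²] ≤ σ_DP² for all i, k, and E[⟨z_i^k, z_j^l⟩] = 0 whenever (i, k) ≠ (j, l); assume ĝ⁰ = (1/n)∑_{i=1}^n g_i⁰. Let L_max = max_{1≤i≤n} L_i and R = max_{1≤i≤n} ‖∇f_i(x⁰) − g_i⁰‖. Assume 0 < β ≤ α (which implies β/(α + R) < 1) and 0 < γ ≤ (β·R/(α + R))·(1/L_max). Then for every K ∈ ℕ: min_{0≤k≤K} E[‖∇f(x^k)‖] ≤ (f(x⁰) − f_inf)/(γ(K + 1)) + 2R + (L/2)·γ + 2·√(β²·(K + 1)·σ_DP²). -/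

import Mathlib

open MeasureTheory
open scoped Classical

section Aux
open InnerProductSpace

variable {F : Type*} [NormedAddCommGroup F] [InnerProductSpace ℝ F] [CompleteSpace F]

private lemma fderiv_apply_eq_inner_gradient (f : F → ℝ) (x : F) (v : F) :
    fderiv ℝ f x v = inner ℝ (gradient f x) v := by
  rw [gradient, ← toDual_symm_apply]

private lemma descent_lemma (f : F → ℝ) (hf : Differentiable ℝ f) (L : ℝ) (hL : 0 < L)
    (hlip : ∀ a b, ‖gradient f a - gradient f b‖ ≤ L * ‖a - b‖) (x y : F) :
    f y ≤ f x + inner ℝ (gradient f x) (y - x) + L / 2 * ‖y - x‖ ^ 2 := by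
  set v := y - x with hv
  have hderiv : ∀ t : ℝ, HasDerivAt (fun t : ℝ => f (x + t • v))
      (inner ℝ (gradient f (x + t • v)) v) t := by
    intro t
    have h1 : HasDerivAt (fun t : ℝ => x + t • v) v t := by
      simpa using ((hasDerivAt_id t).smul_const v).const_add x
    have h2 := (hf (x + t • v)).hasFDerivAt.comp_hasDerivAt t h1
    rw [fderiv_apply_eq_inner_gradient] at h2; exact h2
  have hgc : Continuous (gradient f) :=
    (LipschitzWith.of_dist_le_mul (K := ⟨L, hL.le⟩) (fun a b => by
      rw [dist_eq_norm, dist_eq_norm]; exact hlip a b)).continuous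
  have hcont : Continuous fun t : ℝ => (inner ℝ (gradient f (x + t • v)) v : ℝ) :=
    ((hgc.comp (by continuity)).inner continuous_const)
  have hftc : ∫ t in (0:ℝ)..1, (inner ℝ (gradient f (x + t • v)) v : ℝ) = f y - f x := by
    have := intervalIntegral.integral_eq_sub_of_hasDerivAt
      (f := fun t : ℝ => f (x + t • v))
      (f' := fun t : ℝ => (inner ℝ (gradient f (x + t • v)) v : ℝ))
      (a := 0) (b := 1) (fun t _ => hderiv t)
      (hcont.intervalIntegrable 0 1)
    simpa [hv] using this
  have hmono : ∫ t in (0:ℝ)..1, (inner ℝ (gradient f (x + t • v)) v : ℝ) ≤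
      ∫ t in (0:ℝ)..1, ((inner ℝ (gradient f x) v : ℝ) + L * t * ‖v‖ ^ 2) := by
    apply intervalIntegral.integral_mono_on (by norm_num)
      (hcont.intervalIntegrable 0 1)
      (by apply Continuous.intervalIntegrable; continuity)
    intro t ht
    have h1 : (inner ℝ (gradient f (x + t • v)) v : ℝ) - inner ℝ (gradient f x) v
        = inner ℝ (gradient f (x + t • v) - gradient f x) v := by
      rw [inner_sub_left]
    have h2 : (inner ℝ (gradient f (x + t • v) - gradient f x) v : ℝ) ≤
        ‖gradient f (x + t • v) - gradient f x‖ * ‖v‖ :=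
      real_inner_le_norm _ _
    have h3 : ‖gradient f (x + t • v) - gradient f x‖ ≤ L * (t * ‖v‖) := by
      have := hlip (x + t • v) x
      simpa [norm_smul, abs_of_nonneg ht.1] using this
    nlinarith [norm_nonneg v, mul_le_mul_of_nonneg_right h3 (norm_nonneg v)]
  have hrhs : ∫ t in (0:ℝ)..1, ((inner ℝ (gradient f x) v : ℝ) + L * t * ‖v‖ ^ 2)
      = inner ℝ (gradient f x) v + L / 2 * ‖v‖ ^ 2 := by
    have : ∀ t : ℝ, (inner ℝ (gradient f x) v : ℝ) + L * t * ‖v‖ ^ 2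
        = (inner ℝ (gradient f x) v : ℝ) + (L * ‖v‖ ^ 2) * t := by intro t; ring
    simp only [this]
    rw [intervalIntegral.integral_add (intervalIntegrable_const)
      (by apply Continuous.intervalIntegrable; continuity)]
    rw [intervalIntegral.integral_const_mul, integral_id]
    norm_num; ring
  linarith [hftc ▸ hmono.trans_eq hrhs]

private lemma inner_normalized_ge (a b : F) (hb : b ≠ 0) :
    ‖a‖ - 2 * ‖a - b‖ ≤ inner ℝ a (‖b‖⁻¹ • b) := by
  have hbn : (0:ℝ) < ‖b‖ := norm_pos_iff.mpr hb
  have h1 : (inner ℝ a b : ℝ) = inner ℝ (a - b) b + ‖b‖ ^ 2 := by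
    rw [inner_sub_left, real_inner_self_eq_norm_sq]; ring
  have h2 : -(‖a - b‖ * ‖b‖) ≤ (inner ℝ (a - b) b : ℝ) := by
    have := abs_real_inner_le_norm (a - b) b
    rw [abs_le] at this; exact this.1
  have h3 : ‖a‖ ≤ ‖a - b‖ + ‖b‖ := by
    simpa using norm_add_le (a - b) b
  have h4 : (inner ℝ a (‖b‖⁻¹ • b) : ℝ) = ‖b‖⁻¹ * inner ℝ a b := real_inner_smul_right a b _
  rw [h4, h1]
  have e1 : ‖b‖⁻¹ * (-(‖a - b‖ * ‖b‖) + ‖b‖ ^ 2) = ‖b‖ - ‖a - b‖ := by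
    field_simp; ring
  have e2 := mul_le_mul_of_nonneg_left (add_le_add_right h2 (‖b‖ ^ 2))
    (inv_nonneg.mpr hbn.le)
  linarith

private lemma integral_le_sqrt_of_sq {Ω : Type*} [MeasurableSpace Ω] (μ : Measure Ω)
    [IsProbabilityMeasure μ] (h : Ω → ℝ) (h0 : ∀ ω, 0 ≤ h ω)
    (hint : Integrable h μ) (hint2 : Integrable (fun ω => h ω ^ 2) μ)
    (A : ℝ) (hA : ∫ ω, h ω ^ 2 ∂μ ≤ A) : ∫ ω, h ω ∂μ ≤ Real.sqrt A := by
  set m := ∫ ω, h ω ∂μ with hm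
  have hm0 : 0 ≤ m := integral_nonneg h0
  have hexp : ∫ ω, (h ω - m) ^ 2 ∂μ = (∫ ω, h ω ^ 2 ∂μ) - m ^ 2 := by
    have heq : ∀ ω, (h ω - m) ^ 2 = (h ω ^ 2 + m ^ 2) - (2 * m) * h ω := by
      intro ω; ring
    simp only [heq]
    have hadd : Integrable (fun ω => h ω ^ 2 + m ^ 2) μ := hint2.add (integrable_const _)
    rw [integral_sub hadd (hint.const_mul (2 * m)),
      integral_add hint2 (integrable_const (m ^ 2)), MeasureTheory.integral_const_mul,
      integral_const]
    simp only [measure_univ, probReal_univ, ENNReal.toReal_one, smul_eq_mul, one_mul, ← hm]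
    ring
  have hpos : 0 ≤ ∫ ω, (h ω - m) ^ 2 ∂μ := integral_nonneg fun ω => sq_nonneg _
  have hmsq : m ^ 2 ≤ A := by linarith
  have : m ≤ Real.sqrt (m ^ 2) := by rw [Real.sqrt_sq hm0]
  exact this.trans (Real.sqrt_le_sqrt hmsq)

variable {d : ℕ} {Ω : Type*} [MeasurableSpace Ω] {μ : Measure Ω} {ι : Type*}

private lemma inner_integrable (w v : Ω → EuclideanSpace ℝ (Fin d))
    (hw : Measurable w) (hv : Measurable v)
    (hiw : Integrable (fun ω => ‖w ω‖ ^ 2) μ) (hiv : Integrable (fun ω => ‖v ω‖ ^ 2) μ) :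
    Integrable (fun ω => (inner ℝ (w ω) (v ω) : ℝ)) μ := by
  apply Integrable.mono' ((hiw.add hiv).div_const 2)
  · exact (hw.inner hv).aestronglyMeasurable
  · filter_upwards with ω
    simp only [Pi.add_apply]
    rw [Real.norm_eq_abs]
    have h1 := abs_real_inner_le_norm (w ω) (v ω)
    have h2 := sq_nonneg (‖w ω‖ - ‖v ω‖)
    nlinarith [norm_nonneg (w ω), norm_nonneg (v ω)]

private lemma norm_sum_sq_eq (s : Finset ι) (w : ι → Ω → EuclideanSpace ℝ (Fin d)) (ω : Ω) :
    ‖∑ p ∈ s, w p ω‖ ^ 2 = ∑ p ∈ s, ∑ q ∈ s, (inner ℝ (w p ω) (w q ω) : ℝ) := by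
  rw [← real_inner_self_eq_norm_sq, sum_inner]
  exact Finset.sum_congr rfl fun p _ => inner_sum _ _ _

private lemma integrable_norm_sum_sq (s : Finset ι) (w : ι → Ω → EuclideanSpace ℝ (Fin d))
    (hmeas : ∀ p, Measurable (w p)) (hint : ∀ p, Integrable (fun ω => ‖w p ω‖ ^ 2) μ) :
    Integrable (fun ω => ‖∑ p ∈ s, w p ω‖ ^ 2) μ := by
  simp only [norm_sum_sq_eq]
  exact integrable_finset_sum s fun p _ => integrable_finset_sum s fun q _ =>
    inner_integrable _ _ (hmeas p) (hmeas q) (hint p) (hint q)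

private lemma integral_norm_sum_sq (s : Finset ι) (w : ι → Ω → EuclideanSpace ℝ (Fin d))
    (hmeas : ∀ p, Measurable (w p)) (hint : ∀ p, Integrable (fun ω => ‖w p ω‖ ^ 2) μ)
    (horth : ∀ p ∈ s, ∀ q ∈ s, p ≠ q → ∫ ω, (inner ℝ (w p ω) (w q ω) : ℝ) ∂μ = 0) :
    ∫ ω, ‖∑ p ∈ s, w p ω‖ ^ 2 ∂μ = ∑ p ∈ s, ∫ ω, ‖w p ω‖ ^ 2 ∂μ := by
  simp only [norm_sum_sq_eq]
  rw [integral_finset_sum s fun p _ => integrable_finset_sum s fun q _ =>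
    inner_integrable _ _ (hmeas p) (hmeas q) (hint p) (hint q)]
  refine Finset.sum_congr rfl fun p hp => ?_
  rw [integral_finset_sum s fun q _ =>
    inner_integrable _ _ (hmeas p) (hmeas q) (hint p) (hint q)]
  rw [Finset.sum_eq_single_of_mem p hp (fun q hq hne => horth p hp q hq (Ne.symm hne))]
  congr 1
  ext ω
  exact real_inner_self_eq_norm_sq _

end Aux

set_option maxHeartbeats 2000000 in
/-- Convergence of DP-α-NormEC (Theorem 2): under `0 < β ≤ α` and
`0 < γ ≤ (βR/(α+R))·(1/L_max)` with `R = max_i ‖∇f_i(x⁰) − g_i⁰‖` and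
`L_max = max_i L_i`, and for noise with `E[‖z_i^k‖²] ≤ σ_DP²` and pairwise
orthogonality, the DP-α-NormEC iterates satisfy, for every `K`,
`min_{0≤k≤K} E[‖∇f(x^k)‖] ≤ (f(x⁰) − f_inf)/(γ(K+1)) + 2R + (L/2)γ
  + 2√(β²(K+1)σ_DP²)`. -/
theorem dp_alpha_normec_convergence
    (d n : ℕ) (hn : 0 < n)
    {Ω : Type*} [MeasurableSpace Ω] (μ : Measure Ω) [IsProbabilityMeasure μ]
    (fi : Fin n → EuclideanSpace ℝ (Fin d) → ℝ)
    (f : EuclideanSpace ℝ (Fin d) → ℝ)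
    (hf : ∀ y, f y = (n : ℝ)⁻¹ * ∑ i, fi i y)
    (hdiffi : ∀ i, Differentiable ℝ (fi i))
    (hdiff : Differentiable ℝ f)
    (Li : Fin n → ℝ) (hLipos : ∀ i, 0 < Li i)
    (hlipi : ∀ i x y, ‖gradient (fi i) x - gradient (fi i) y‖ ≤ Li i * ‖x - y‖)
    (L : ℝ) (hL : 0 < L)
    (hlip : ∀ x y, ‖gradient f x - gradient f y‖ ≤ L * ‖x - y‖)
    (finf : ℝ) (hfinf : ∀ y, finf ≤ f y)
    (α β γ σDP Lmax R : ℝ) (hσ : 0 ≤ σDP)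
    (hLmax : Lmax = Finset.univ.sup' (Finset.univ_nonempty_iff.mpr ⟨⟨0, hn⟩⟩) Li)
    (x0 : EuclideanSpace ℝ (Fin d)) (g0 : Fin n → EuclideanSpace ℝ (Fin d))
    (x : ℕ → Ω → EuclideanSpace ℝ (Fin d))
    (g : Fin n → ℕ → Ω → EuclideanSpace ℝ (Fin d))
    (ghat : ℕ → Ω → EuclideanSpace ℝ (Fin d))
    (z : Fin n → ℕ → Ω → EuclideanSpace ℝ (Fin d))
    (hzmeas : ∀ i k, Measurable (z i k))
    (hzint : ∀ i k, Integrable (fun ω => ‖z i k ω‖ ^ 2) μ)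
    (hzvar : ∀ i k, ∫ ω, ‖z i k ω‖ ^ 2 ∂μ ≤ σDP ^ 2)
    (hzorth : ∀ (i : Fin n) (k : ℕ) (j : Fin n) (l : ℕ), (i, k) ≠ (j, l) →
      ∫ ω, (inner ℝ (z i k ω) (z j l ω) : ℝ) ∂μ = 0)
    (hx0 : ∀ ω, x 0 ω = x0)
    (hg0 : ∀ i ω, g i 0 ω = g0 i)
    (hghat0 : ∀ ω, ghat 0 ω = (n : ℝ)⁻¹ • ∑ i, g0 i)
    (hR : R = Finset.univ.sup' (Finset.univ_nonempty_iff.mpr ⟨⟨0, hn⟩⟩)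
      (fun i => ‖gradient (fi i) x0 - g0 i‖))
    (hβ : 0 < β) (hβα : β ≤ α)
    (hγ : 0 < γ) (hγle : γ ≤ (β * R / (α + R)) * (1 / Lmax))
    (hg : ∀ (ω : Ω) (i : Fin n) (k : ℕ), g i (k + 1) ω = g i k ω +
      β • ((α + ‖gradient (fi i) (x k ω) - g i k ω‖)⁻¹ •
        (gradient (fi i) (x k ω) - g i k ω)))
    (hghat : ∀ (ω : Ω) (k : ℕ), ghat (k + 1) ω = ghat k ω +
      (β / n) • ∑ i, (((α + ‖gradient (fi i) (x k ω) - g i k ω‖)⁻¹ •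
        (gradient (fi i) (x k ω) - g i k ω)) + z i k ω))
    (hx : ∀ (ω : Ω) (k : ℕ), x (k + 1) ω =
      if ghat (k + 1) ω = 0 then x k ω
      else x k ω - γ • ‖ghat (k + 1) ω‖⁻¹ • ghat (k + 1) ω)
    (K : ℕ) :
    (Finset.range (K + 1)).inf' (Finset.nonempty_range_iff.mpr (Nat.succ_ne_zero K))
        (fun k => ∫ ω, ‖gradient f (x k ω)‖ ∂μ) ≤
      (f x0 - finf) / (γ * (K + 1)) + 2 * R + (L / 2) * γ +
        2 * Real.sqrt (β ^ 2 * (K + 1) * σDP ^ 2) := by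
  -- basic positivity facts
  have hα : 0 < α := hβ.trans_le hβα
  have hRle : ∀ i, ‖gradient (fi i) x0 - g0 i‖ ≤ R := fun i =>
    hR ▸ Finset.le_sup' (fun i => ‖gradient (fi i) x0 - g0 i‖) (Finset.mem_univ i)
  have hR0 : 0 ≤ R := le_trans (norm_nonneg _) (hRle ⟨0, hn⟩)
  have hαR : 0 < α + R := by linarith
  have hLile : ∀ i, Li i ≤ Lmax := fun i => hLmax ▸ Finset.le_sup' Li (Finset.mem_univ i)
  have hLmaxpos : 0 < Lmax := lt_of_lt_of_le (hLipos ⟨0, hn⟩) (hLile ⟨0, hn⟩)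
  have hγL : Lmax * γ ≤ β * R / (α + R) := by
    have := mul_le_mul_of_nonneg_left hγle hLmaxpos.le
    rw [mul_comm (β * R / (α + R)) (1 / Lmax), ← mul_assoc] at this
    field_simp at this
    rw [le_div_iff₀ hαR]; linarith [this]
  have hnpos : (0:ℝ) < n := by exact_mod_cast hn
  have hn1 : (1:ℝ) ≤ n := by exact_mod_cast hn
  -- step size bound
  have hstep : ∀ (ω : Ω) (k : ℕ), ‖x (k + 1) ω - x k ω‖ ≤ γ := by
    intro ω k
    rw [hx ω k]
    split_ifs with hc
    · simpa using hγ.le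
    · have hgn : (0:ℝ) < ‖ghat (k + 1) ω‖ := norm_pos_iff.mpr hc
      have : x k ω - γ • ‖ghat (k + 1) ω‖⁻¹ • ghat (k + 1) ω - x k ω
          = -(γ • ‖ghat (k + 1) ω‖⁻¹ • ghat (k + 1) ω) := by abel
      rw [this, norm_neg, norm_smul, norm_smul, norm_inv, norm_norm,
        inv_mul_cancel₀ hgn.ne', mul_one, Real.norm_eq_abs, abs_of_pos hγ]
  -- scalar contraction inequality
  have hsc : ∀ s : ℝ, 0 ≤ s → s ≤ R → Lmax * γ + (1 - β / (α + s)) * s ≤ R := by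
    intro s hs hsR
    have hαs : 0 < α + s := by linarith
    have e : (1 - β / (α + s)) * s = s - β * s / (α + s) := by
      field_simp
    have key : β * R / (α + R) - β * s / (α + s) ≤ R - s := by
      rw [div_sub_div _ _ hαR.ne' hαs.ne', div_le_iff₀ (by positivity)]
      nlinarith [mul_nonneg (sub_nonneg.mpr hsR) (sub_nonneg.mpr
        (by nlinarith : β * α ≤ (α + R) * (α + s)))]
    rw [e]; linarith
  -- error bound by induction
  have hebound : ∀ (k : ℕ) (ω : Ω) (i : Fin n),
      ‖gradient (fi i) (x k ω) - g i k ω‖ ≤ R := by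
    intro k
    induction k with
    | zero => intro ω i; rw [hx0 ω, hg0 i ω]; exact hRle i
    | succ k ih =>
      intro ω i
      set e := gradient (fi i) (x k ω) - g i k ω with he
      have hc : 0 < α + ‖e‖ := by positivity
      have hge : g i (k + 1) ω = g i k ω + (β / (α + ‖e‖)) • e := by
        rw [hg ω i k, smul_smul, div_eq_mul_inv]
      have hdecomp : gradient (fi i) (x (k + 1) ω) - g i (k + 1) ω
          = (gradient (fi i) (x (k + 1) ω) - gradient (fi i) (x k ω))
            + (1 - β / (α + ‖e‖)) • e := by
        rw [hge, sub_smul, one_smul, he]; abel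
      have hco : 0 ≤ 1 - β / (α + ‖e‖) := by
        have : β / (α + ‖e‖) ≤ 1 := by
          rw [div_le_one hc]; linarith [norm_nonneg e]
        linarith
      have h1 : ‖gradient (fi i) (x (k + 1) ω) - gradient (fi i) (x k ω)‖ ≤ Lmax * γ := by
        refine le_trans (hlipi i _ _) ?_
        have := mul_le_mul_of_nonneg_left (hstep ω k) (hLipos i).le
        have h2 := mul_le_mul_of_nonneg_right (hLile i) hγ.le
        linarith
      have h2 : ‖(1 - β / (α + ‖e‖)) • e‖ = (1 - β / (α + ‖e‖)) * ‖e‖ := by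
        rw [norm_smul, Real.norm_eq_abs, abs_of_nonneg hco]
      calc ‖gradient (fi i) (x (k + 1) ω) - g i (k + 1) ω‖
          ≤ ‖gradient (fi i) (x (k + 1) ω) - gradient (fi i) (x k ω)‖
            + ‖(1 - β / (α + ‖e‖)) • e‖ := by rw [hdecomp]; exact norm_add_le _ _
        _ ≤ Lmax * γ + (1 - β / (α + ‖e‖)) * ‖e‖ := by rw [h2]; linarith
        _ ≤ R := hsc ‖e‖ (norm_nonneg e) (ih ω i)
  -- noise accumulation process
  set Z : ℕ → Ω → EuclideanSpace ℝ (Fin d) :=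
    fun k ω => (β / n) • ∑ l ∈ Finset.range k, ∑ i, z i l ω with hZdef
  have hghatS : ∀ (ω : Ω) (k : ℕ), ghat k ω = (n:ℝ)⁻¹ • ∑ i, g i k ω + Z k ω := by
    intro ω k
    induction k with
    | zero =>
      simp only [hZdef, Finset.range_zero, Finset.sum_empty, smul_zero, add_zero,
        hghat0 ω]
      congr 1
      exact Finset.sum_congr rfl fun i _ => (hg0 i ω).symm
    | succ k ih =>
      rw [hghat ω k, ih]
      have hgs : ∑ i, g i (k + 1) ω = ∑ i, g i k ω
          + ∑ i, β • ((α + ‖gradient (fi i) (x k ω) - g i k ω‖)⁻¹ •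
            (gradient (fi i) (x k ω) - g i k ω)) := by
        rw [← Finset.sum_add_distrib]
        exact Finset.sum_congr rfl fun i _ => hg ω i k
      rw [hgs, ← Finset.smul_sum]
      simp only [hZdef, Finset.sum_range_succ, Finset.sum_add_distrib]
      rw [div_eq_mul_inv β (n:ℝ)]
      match_scalars <;> ring
  -- gradient of f as average
  have hgradf : ∀ y, gradient f y = (n:ℝ)⁻¹ • ∑ i, gradient (fi i) y := by
    intro y
    have hfe : f = fun y => (n : ℝ)⁻¹ * ∑ i, fi i y := funext hf
    have h1 : fderiv ℝ f y = (n:ℝ)⁻¹ • ∑ i, fderiv ℝ (fi i) y := by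
      rw [hfe]
      rw [fderiv_const_mul (by
        exact DifferentiableAt.fun_sum fun i _ => (hdiffi i).differentiableAt) ((n:ℝ)⁻¹)]
      congr 1
      exact fderiv_fun_sum fun i _ => (hdiffi i).differentiableAt
    show (InnerProductSpace.toDual ℝ _).symm (fderiv ℝ f y) = _
    rw [h1, _root_.map_smul, _root_.map_sum]
    rfl
  -- gap bound
  have hgap : ∀ (ω : Ω) (k : ℕ),
      ‖gradient f (x k ω) - ghat (k + 1) ω‖ ≤ R + ‖Z (k + 1) ω‖ := by
    intro ω k
    have h1 : gradient f (x k ω) - ghat (k + 1) ω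
        = (n:ℝ)⁻¹ • ∑ i, (gradient (fi i) (x k ω) - g i (k + 1) ω) - Z (k + 1) ω := by
      rw [hgradf, hghatS ω (k + 1), Finset.sum_sub_distrib, smul_sub]
      abel
    have h2 : ∀ i, ‖gradient (fi i) (x k ω) - g i (k + 1) ω‖ ≤ R := by
      intro i
      set e := gradient (fi i) (x k ω) - g i k ω with he
      have hc : 0 < α + ‖e‖ := by positivity
      have hco : 0 ≤ 1 - β / (α + ‖e‖) := by
        have : β / (α + ‖e‖) ≤ 1 := by
          rw [div_le_one hc]; linarith [norm_nonneg e]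
        linarith
      have hd : gradient (fi i) (x k ω) - g i (k + 1) ω = (1 - β / (α + ‖e‖)) • e := by
        rw [hg ω i k, smul_smul, ← div_eq_mul_inv, sub_smul, one_smul, he]
        abel
      rw [hd, norm_smul, Real.norm_eq_abs, abs_of_nonneg hco]
      have h3 : β / (α + ‖e‖) * ‖e‖ ≥ 0 := by positivity
      have := hebound k ω i
      rw [← he] at this
      nlinarith [norm_nonneg e]
    have h3 : ‖(n:ℝ)⁻¹ • ∑ i, (gradient (fi i) (x k ω) - g i (k + 1) ω)‖ ≤ R := by
      rw [norm_smul, Real.norm_eq_abs, abs_of_nonneg (by positivity : (0:ℝ) ≤ (n:ℝ)⁻¹)]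
      have h4 : ‖∑ i, (gradient (fi i) (x k ω) - g i (k + 1) ω)‖ ≤ (n:ℝ) * R := by
        refine le_trans (norm_sum_le _ _) ?_
        have := Finset.sum_le_sum (fun i (_ : i ∈ Finset.univ) => h2 i)
        simpa [Finset.sum_const, Finset.card_univ, nsmul_eq_mul] using this
      calc (n:ℝ)⁻¹ * ‖∑ i, (gradient (fi i) (x k ω) - g i (k + 1) ω)‖
          ≤ (n:ℝ)⁻¹ * ((n:ℝ) * R) := by
            exact mul_le_mul_of_nonneg_left h4 (by positivity)
        _ = R := by field_simp
    calc ‖gradient f (x k ω) - ghat (k + 1) ω‖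
        ≤ ‖(n:ℝ)⁻¹ • ∑ i, (gradient (fi i) (x k ω) - g i (k + 1) ω)‖ + ‖Z (k + 1) ω‖ := by
          rw [h1]; exact norm_sub_le _ _
      _ ≤ R + ‖Z (k + 1) ω‖ := by linarith
  -- key per-step inequality
  have hkey : ∀ (ω : Ω) (k : ℕ), γ * ‖gradient f (x k ω)‖ ≤
      f (x k ω) - f (x (k + 1) ω) + (2 * γ * R + L / 2 * γ ^ 2)
        + 2 * γ * ‖Z (k + 1) ω‖ := by
    intro ω k
    by_cases hc : ghat (k + 1) ω = 0
    · have hx1 : x (k + 1) ω = x k ω := by rw [hx ω k]; simp [hc]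
      have hb : ‖gradient f (x k ω)‖ ≤ R + ‖Z (k + 1) ω‖ := by
        have := hgap ω k; rwa [hc, sub_zero] at this
      have := mul_le_mul_of_nonneg_left hb hγ.le
      rw [hx1]
      nlinarith [norm_nonneg (Z (k + 1) ω), sq_nonneg γ]
    · have hx1 : x (k + 1) ω = x k ω - γ • ‖ghat (k + 1) ω‖⁻¹ • ghat (k + 1) ω := by
        rw [hx ω k]; simp [hc]
      have hd := descent_lemma f hdiff L hL hlip (x k ω) (x (k + 1) ω)
      have hdiffx : x (k + 1) ω - x k ω = -(γ • ‖ghat (k + 1) ω‖⁻¹ • ghat (k + 1) ω) := by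
        rw [hx1]; abel
      have hn2 : ‖x (k + 1) ω - x k ω‖ ^ 2 ≤ γ ^ 2 := by
        have := hstep ω k
        nlinarith [norm_nonneg (x (k + 1) ω - x k ω)]
      have hip : (inner ℝ (gradient f (x k ω)) (x (k + 1) ω - x k ω) : ℝ)
          = -(γ * inner ℝ (gradient f (x k ω)) (‖ghat (k + 1) ω‖⁻¹ • ghat (k + 1) ω)) := by
        rw [hdiffx, inner_neg_right, real_inner_smul_right]
      have hig := inner_normalized_ge (gradient f (x k ω)) (ghat (k + 1) ω) hc
      have hgapk := hgap ω k
      have h5 : (inner ℝ (gradient f (x k ω))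
          (‖ghat (k + 1) ω‖⁻¹ • ghat (k + 1) ω) : ℝ)
          ≥ ‖gradient f (x k ω)‖ - 2 * (R + ‖Z (k + 1) ω‖) := by
        have h6 : ‖gradient f (x k ω)‖ - 2 * (R + ‖Z (k + 1) ω‖)
            ≤ ‖gradient f (x k ω)‖ - 2 * ‖gradient f (x k ω) - ghat (k + 1) ω‖ := by
          linarith
        linarith
      have h7 : L / 2 * ‖x (k + 1) ω - x k ω‖ ^ 2 ≤ L / 2 * γ ^ 2 := by
        exact mul_le_mul_of_nonneg_left hn2 (by linarith)
      rw [hip] at hd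
      nlinarith [mul_le_mul_of_nonneg_left h5 hγ.le]
  -- measurability of iterates
  have hgic : ∀ i, Continuous (gradient (fi i)) := fun i =>
    (LipschitzWith.of_dist_le_mul (K := ⟨Li i, (hLipos i).le⟩) (fun a b => by
      rw [dist_eq_norm, dist_eq_norm]; exact hlipi i a b)).continuous
  have hgfc : Continuous (gradient f) :=
    (LipschitzWith.of_dist_le_mul (K := ⟨L, hL.le⟩) (fun a b => by
      rw [dist_eq_norm, dist_eq_norm]; exact hlip a b)).continuous
  have hmeas : ∀ k, Measurable (x k) ∧ (∀ i, Measurable (g i k)) ∧ Measurable (ghat k) := by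
    intro k
    induction k with
    | zero =>
      refine ⟨?_, fun i => ?_, ?_⟩
      · have : x 0 = fun _ => x0 := funext hx0
        rw [this]; exact measurable_const
      · have : g i 0 = fun _ => g0 i := funext (hg0 i)
        rw [this]; exact measurable_const
      · have : ghat 0 = fun _ => (n : ℝ)⁻¹ • ∑ i, g0 i := funext hghat0
        rw [this]; exact measurable_const
    | succ k ih =>
      obtain ⟨ihx, ihg, ihghat⟩ := ih
      have hΔ : ∀ i : Fin n, Measurable fun ω =>
          (α + ‖gradient (fi i) (x k ω) - g i k ω‖)⁻¹ •
            (gradient (fi i) (x k ω) - g i k ω) := by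
        intro i
        have hGi : Measurable fun ω => gradient (fi i) (x k ω) :=
          (hgic i).measurable.comp ihx
        have hei : Measurable fun ω => gradient (fi i) (x k ω) - g i k ω :=
          hGi.sub (ihg i)
        exact ((measurable_const.add hei.norm).inv).smul hei
      have hgm : ∀ i, Measurable (g i (k + 1)) := by
        intro i
        have : g i (k + 1) = fun ω => g i k ω +
            β • ((α + ‖gradient (fi i) (x k ω) - g i k ω‖)⁻¹ •
              (gradient (fi i) (x k ω) - g i k ω)) := funext fun ω => hg ω i k
        rw [this]
        exact (ihg i).add ((hΔ i).const_smul β)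
      have hghm : Measurable (ghat (k + 1)) := by
        have : ghat (k + 1) = fun ω => ghat k ω +
            (β / n) • ∑ i, (((α + ‖gradient (fi i) (x k ω) - g i k ω‖)⁻¹ •
              (gradient (fi i) (x k ω) - g i k ω)) + z i k ω) := funext fun ω => hghat ω k
        rw [this]
        exact ihghat.add ((Finset.measurable_sum Finset.univ
          (fun i _ => (hΔ i).add (hzmeas i k))).const_smul (β / (n:ℝ)))
      refine ⟨?_, hgm, hghm⟩
      have : x (k + 1) = fun ω => if ghat (k + 1) ω = 0 then x k ω
          else x k ω - γ • ‖ghat (k + 1) ω‖⁻¹ • ghat (k + 1) ω := funext fun ω => hx ω k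
      rw [this]
      refine Measurable.ite ?_ ihx
        (ihx.sub ((hghm.norm.inv.smul hghm).const_smul γ))
      exact hghm (measurableSet_singleton 0)
  -- boundedness of iterates
  have hxball : ∀ (k : ℕ) (ω : Ω), ‖x k ω - x0‖ ≤ k * γ := by
    intro k
    induction k with
    | zero => intro ω; simp [hx0 ω]
    | succ k ih =>
      intro ω
      have h1 : ‖x (k + 1) ω - x0‖ ≤ ‖x (k + 1) ω - x k ω‖ + ‖x k ω - x0‖ :=
        norm_sub_le_norm_sub_add_norm_sub _ _ _
      have := hstep ω k
      have := ih ω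
      push_cast
      push_cast at this
      linarith
  -- integrability of f ∘ x k and ‖∇f(x k)‖
  have hfb : ∀ (D : ℝ), 0 ≤ D → ∀ y, ‖y - x0‖ ≤ D →
      |f y| ≤ |f x0| + ‖gradient f x0‖ * D + 2 * L * D ^ 2 := by
    intro D hD y hy
    have h1 := descent_lemma f hdiff L hL hlip x0 y
    have h2 := descent_lemma f hdiff L hL hlip y x0
    have h3 : (inner ℝ (gradient f x0) (y - x0) : ℝ) ≤ ‖gradient f x0‖ * D := by
      refine le_trans (real_inner_le_norm _ _) ?_
      exact mul_le_mul_of_nonneg_left hy (norm_nonneg _)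
    have h4 : (inner ℝ (gradient f y) (x0 - y) : ℝ) ≤ (‖gradient f x0‖ + L * D) * D := by
      refine le_trans (real_inner_le_norm _ _) ?_
      have h5 : ‖gradient f y‖ ≤ ‖gradient f x0‖ + L * D := by
        have := hlip y x0
        have h6 := norm_sub_norm_le (gradient f y) (gradient f x0)
        have h7 := mul_le_mul_of_nonneg_left hy hL.le
        linarith
      have h8 : ‖x0 - y‖ ≤ D := by rwa [norm_sub_rev]
      calc ‖gradient f y‖ * ‖x0 - y‖ ≤ (‖gradient f x0‖ + L * D) * ‖x0 - y‖ := by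
            exact mul_le_mul_of_nonneg_right h5 (norm_nonneg _)
        _ ≤ (‖gradient f x0‖ + L * D) * D := by
            refine mul_le_mul_of_nonneg_left h8 ?_
            positivity
    have h9 : ‖y - x0‖ ^ 2 ≤ D ^ 2 := by nlinarith [norm_nonneg (y - x0)]
    have h10 : ‖x0 - y‖ ^ 2 ≤ D ^ 2 := by rw [norm_sub_rev]; exact h9
    rw [abs_le]
    constructor <;> [skip; skip] <;>
      [nlinarith [abs_nonneg (f x0), le_abs_self (f x0), neg_abs_le (f x0),
        norm_nonneg (gradient f x0)];
       nlinarith [abs_nonneg (f x0), le_abs_self (f x0), neg_abs_le (f x0),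
        norm_nonneg (gradient f x0)]]
  have hfint : ∀ k, Integrable (fun ω => f (x k ω)) μ := by
    intro k
    refine Integrable.mono' (g := fun _ => |f x0| + ‖gradient f x0‖ * (k * γ)
      + 2 * L * (k * γ) ^ 2) (integrable_const _) ?_ ?_
    · exact (hdiff.continuous.measurable.comp (hmeas k).1).aestronglyMeasurable
    · filter_upwards with ω
      rw [Real.norm_eq_abs]
      exact hfb (k * γ) (by positivity) (x k ω) (hxball k ω)
  have hgradint : ∀ k, Integrable (fun ω => ‖gradient f (x k ω)‖) μ := by
    intro k
    refine Integrable.mono' (g := fun _ => ‖gradient f x0‖ + L * (k * γ))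
      (integrable_const _) ?_ ?_
    · exact ((hgfc.measurable.comp (hmeas k).1).norm).aestronglyMeasurable
    · filter_upwards with ω
      rw [Real.norm_eq_abs, abs_of_nonneg (norm_nonneg _)]
      have := hlip (x k ω) x0
      have h6 := norm_sub_norm_le (gradient f (x k ω)) (gradient f x0)
      have h7 := mul_le_mul_of_nonneg_left (hxball k ω) hL.le
      linarith
  -- noise moment bounds
  have hZsum : ∀ (k : ℕ) (ω : Ω), Z k ω = (β / n) •
      ∑ p ∈ Finset.range k ×ˢ (Finset.univ : Finset (Fin n)), z p.2 p.1 ω := by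
    intro k ω
    rw [hZdef]
    congr 1
    rw [Finset.sum_product]
  have hZmeas : ∀ k, Measurable (Z k) := by
    intro k
    rw [hZdef]
    exact (Finset.measurable_sum (Finset.range k)
      (fun l _ => Finset.measurable_sum Finset.univ
        (fun i _ => hzmeas i l))).const_smul (β / (n:ℝ))
  have hZnormsq : ∀ (k : ℕ) (ω : Ω), ‖Z k ω‖ ^ 2 = (β / n) ^ 2 *
      ‖∑ p ∈ Finset.range k ×ˢ (Finset.univ : Finset (Fin n)), z p.2 p.1 ω‖ ^ 2 := by
    intro k ω
    rw [hZsum k ω, norm_smul, mul_pow, Real.norm_eq_abs, sq_abs]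
  have hZint2 : ∀ k, Integrable (fun ω => ‖Z k ω‖ ^ 2) μ := by
    intro k
    simp only [hZnormsq]
    have h := integrable_norm_sum_sq (μ := μ) (Finset.range k ×ˢ Finset.univ)
      (fun p : ℕ × Fin n => z p.2 p.1) (fun p => hzmeas p.2 p.1) (fun p => hzint p.2 p.1)
    exact h.const_mul _
  have hZint1 : ∀ k, Integrable (fun ω => ‖Z k ω‖) μ := by
    intro k
    refine Integrable.mono' ((integrable_const (1:ℝ)).add (hZint2 k)) ?_ ?_
    · exact ((hZmeas k).norm).aestronglyMeasurable
    · filter_upwards with ω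
      simp only [Pi.add_apply]
      rw [Real.norm_eq_abs, abs_of_nonneg (norm_nonneg _)]
      nlinarith [norm_nonneg (Z k ω), sq_nonneg (‖Z k ω‖ - 1)]
  have hA0 : 0 ≤ β ^ 2 * ((K:ℝ) + 1) * σDP ^ 2 := by positivity
  have hZEbound : ∀ k, k ≤ K + 1 → ∫ ω, ‖Z k ω‖ ∂μ ≤
      Real.sqrt (β ^ 2 * ((K:ℝ) + 1) * σDP ^ 2) := by
    intro k hk
    refine integral_le_sqrt_of_sq μ _ (fun ω => norm_nonneg _) (hZint1 k) (hZint2 k) _ ?_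
    have h1 : ∫ ω, ‖Z k ω‖ ^ 2 ∂μ = (β / n) ^ 2 *
        ∫ ω, ‖∑ p ∈ Finset.range k ×ˢ (Finset.univ : Finset (Fin n)),
          z p.2 p.1 ω‖ ^ 2 ∂μ := by
      simp only [hZnormsq]
      rw [MeasureTheory.integral_const_mul]
    have h2' := integral_norm_sum_sq (μ := μ) (Finset.range k ×ˢ Finset.univ)
      (fun p : ℕ × Fin n => z p.2 p.1) (fun p => hzmeas p.2 p.1) (fun p => hzint p.2 p.1)
      (fun p _ q _ hpq => hzorth p.2 p.1 q.2 q.1 (fun h => hpq (Prod.ext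
        (by simpa using congrArg Prod.snd h) (by simpa using congrArg Prod.fst h))))
    rw [h1, h2']
    have h2 : ∑ p ∈ Finset.range k ×ˢ (Finset.univ : Finset (Fin n)),
        ∫ ω, ‖z p.2 p.1 ω‖ ^ 2 ∂μ ≤ (k * n : ℝ) * σDP ^ 2 := by
      refine le_trans (Finset.sum_le_sum (fun p _ => hzvar p.2 p.1)) ?_
      rw [Finset.sum_const, Finset.card_product, Finset.card_range, Finset.card_univ,
        Fintype.card_fin, nsmul_eq_mul]
      push_cast
      exact le_of_eq (by ring)
    have hkK : (k:ℝ) ≤ (K:ℝ) + 1 := by exact_mod_cast hk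
    have h3 : (β / n) ^ 2 * ((k * n : ℝ) * σDP ^ 2) = β ^ 2 * (k:ℝ) * σDP ^ 2 / n := by
      field_simp
    have h4 : β ^ 2 * (k:ℝ) * σDP ^ 2 / n ≤ β ^ 2 * ((K:ℝ) + 1) * σDP ^ 2 := by
      rw [div_le_iff₀ hnpos]
      nlinarith [sq_nonneg β, sq_nonneg σDP, mul_nonneg (sq_nonneg β) (sq_nonneg σDP)]
    calc (β / n) ^ 2 * ∑ p ∈ Finset.range k ×ˢ (Finset.univ : Finset (Fin n)),
        ∫ ω, ‖z p.2 p.1 ω‖ ^ 2 ∂μ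
        ≤ (β / n) ^ 2 * ((k * n : ℝ) * σDP ^ 2) := by
          exact mul_le_mul_of_nonneg_left h2 (by positivity)
      _ = β ^ 2 * (k:ℝ) * σDP ^ 2 / n := h3
      _ ≤ β ^ 2 * ((K:ℝ) + 1) * σDP ^ 2 := h4
  -- integrate the key inequality
  set φ : ℕ → ℝ := fun k => ∫ ω, ‖gradient f (x k ω)‖ ∂μ with hφdef
  set Fv : ℕ → ℝ := fun k => ∫ ω, f (x k ω) ∂μ with hFdef
  set sq : ℝ := Real.sqrt (β ^ 2 * ((K:ℝ) + 1) * σDP ^ 2) with hsqdef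
  have hstepE : ∀ k, k ≤ K → γ * φ k ≤ Fv k - Fv (k + 1)
      + (2 * γ * R + L / 2 * γ ^ 2) + 2 * γ * sq := by
    intro k hk
    have hint_rhs : Integrable (fun ω => f (x k ω) - f (x (k + 1) ω)
        + (2 * γ * R + L / 2 * γ ^ 2) + 2 * γ * ‖Z (k + 1) ω‖) μ :=
      (((hfint k).sub (hfint (k + 1))).add (integrable_const _)).add
        ((hZint1 (k + 1)).const_mul _)
    have hint_lhs : Integrable (fun ω => γ * ‖gradient f (x k ω)‖) μ :=
      (hgradint k).const_mul γ
    have h1 := integral_mono hint_lhs hint_rhs (fun ω => hkey ω k)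
    rw [MeasureTheory.integral_const_mul] at h1
    have i1 : Integrable (fun ω => f (x k ω) - f (x (k + 1) ω)) μ :=
      (hfint k).sub (hfint (k + 1))
    have i2 : Integrable (fun ω => f (x k ω) - f (x (k + 1) ω)
        + (2 * γ * R + L / 2 * γ ^ 2)) μ := i1.add (integrable_const _)
    have i3 : Integrable (fun ω => 2 * γ * ‖Z (k + 1) ω‖) μ :=
      (hZint1 (k + 1)).const_mul _
    rw [integral_add i2 i3, integral_add i1 (integrable_const _),
      integral_sub (hfint k) (hfint (k + 1)),
      MeasureTheory.integral_const_mul, integral_const] at h1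
    simp only [measure_univ, probReal_univ, ENNReal.toReal_one, smul_eq_mul, one_mul] at h1
    have h2 := hZEbound (k + 1) (by omega)
    have h3 : 2 * γ * ∫ ω, ‖Z (k + 1) ω‖ ∂μ ≤ 2 * γ * sq := by
      rw [hsqdef]
      exact mul_le_mul_of_nonneg_left h2 (by positivity)
    calc γ * φ k ≤ Fv k - Fv (k + 1) + (2 * γ * R + L / 2 * γ ^ 2)
        + 2 * γ * ∫ ω, ‖Z (k + 1) ω‖ ∂μ := h1
      _ ≤ Fv k - Fv (k + 1) + (2 * γ * R + L / 2 * γ ^ 2) + 2 * γ * sq := by linarith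
  -- telescoping sum
  have hF0 : Fv 0 = f x0 := by
    rw [hFdef]
    have : (fun ω => f (x 0 ω)) = fun _ : Ω => f x0 := funext fun ω => by rw [hx0 ω]
    simp only [this, integral_const, measure_univ, probReal_univ, ENNReal.toReal_one, smul_eq_mul,
      one_mul]
  have hFlb : ∀ k, finf ≤ Fv k := by
    intro k
    rw [hFdef]
    have h1 : ∫ (_ : Ω), finf ∂μ ≤ ∫ ω, f (x k ω) ∂μ :=
      integral_mono (integrable_const _) (hfint k) (fun ω => hfinf (x k ω))
    simpa [integral_const] using h1
  have hsum : γ * ∑ k ∈ Finset.range (K + 1), φ k ≤ (f x0 - finf)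
      + ((K:ℝ) + 1) * ((2 * γ * R + L / 2 * γ ^ 2) + 2 * γ * sq) := by
    have h1 : ∑ k ∈ Finset.range (K + 1), (γ * φ k) ≤
        ∑ k ∈ Finset.range (K + 1), (Fv k - Fv (k + 1)
          + ((2 * γ * R + L / 2 * γ ^ 2) + 2 * γ * sq)) := by
      refine Finset.sum_le_sum fun k hk => ?_
      have := hstepE k (by
        have := Finset.mem_range.mp hk; omega)
      linarith
    rw [Finset.sum_add_distrib, Finset.sum_const, Finset.card_range] at h1
    have h2 : ∑ k ∈ Finset.range (K + 1), (Fv k - Fv (k + 1)) = Fv 0 - Fv (K + 1) := by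
      have := Finset.sum_range_sub' Fv (K + 1)
      simpa using this
    rw [h2] at h1
    rw [Finset.mul_sum]
    have h3 := hFlb (K + 1)
    have h4 : ((K + 1 : ℕ) : ℝ) = (K:ℝ) + 1 := by push_cast; ring
    rw [nsmul_eq_mul, h4] at h1
    rw [hF0] at h1
    linarith
  -- from sum to min
  set m : ℝ := (Finset.range (K + 1)).inf'
    (Finset.nonempty_range_iff.mpr (Nat.succ_ne_zero K)) φ with hmdef
  have hmle : ∀ k ∈ Finset.range (K + 1), m ≤ φ k := fun k hk =>
    Finset.inf'_le φ hk
  have hmsum : ((K:ℝ) + 1) * m ≤ ∑ k ∈ Finset.range (K + 1), φ k := by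
    have h1 : ∑ k ∈ Finset.range (K + 1), m ≤ ∑ k ∈ Finset.range (K + 1), φ k :=
      Finset.sum_le_sum hmle
    rw [Finset.sum_const, Finset.card_range, nsmul_eq_mul] at h1
    push_cast at h1
    linarith
  have hKpos : (0:ℝ) < (K:ℝ) + 1 := by positivity
  have hfinal : γ * (((K:ℝ) + 1) * m) ≤ (f x0 - finf)
      + ((K:ℝ) + 1) * ((2 * γ * R + L / 2 * γ ^ 2) + 2 * γ * sq) := by
    have := mul_le_mul_of_nonneg_left hmsum hγ.le
    linarith
  show m ≤ (f x0 - finf) / (γ * ((K:ℝ) + 1)) + 2 * R + (L / 2) * γ + 2 * sq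
  rw [show (f x0 - finf) / (γ * ((K:ℝ) + 1)) + 2 * R + (L / 2) * γ + 2 * sq
      = ((f x0 - finf) + ((K:ℝ) + 1) * ((2 * γ * R + L / 2 * γ ^ 2) + 2 * γ * sq))
        / (γ * ((K:ℝ) + 1)) from by field_simp; ring]
  rw [le_div_iff₀ (by positivity)]
  nlinarith [hfinal]
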